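/- Let T₁, T₂ be X-trees, and let χ be an optimal convex character for (T₁,T₂) (convex on T₁) with states A ≠ B such that: A and B are F₁-adjacent in the forest F₁ induced by a most parsimonious extension ω₁ of χ to T₁; in the forest F₂ induced by a most parsimonious extension ω₂ of χ to T₂, both A and B occur in exactly one component (both are unique). Then the character χ' obtained by relabeling A := B satisfies ℓ(T₂,χ') ≥ ℓ(T₂,χ) − 1, and hence χ' is again an optimal convex character using one fewer state. -/

import Mathlib

open SimpleGraph

namespace PhyloMP

/-- The set of mutation edges of a vertex coloring `ω` of a graph:
edges whose two endpoints receive different states. -/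
def mutationEdges {V C : Type} (g : SimpleGraph V) (ω : V → C) : Set (Sym2 V) :=
  {e | e ∈ g.edgeSet ∧ ∃ u v : V, e = s(u, v) ∧ ω u ≠ ω v}

/-- An unrooted binary phylogenetic tree on taxon set `X`, with vertex set `V`:
a tree whose degree-1 vertices (leaves) are bijectively labeled by `X` and whose
other vertices have degree 3. -/
structure XTree (X V : Type) [Fintype V] where
  g : SimpleGraph V
  isTree : g.IsTree
  leaf : X → V
  leafInj : Function.Injective leaf
  leafDeg : ∀ x, (g.neighborSet (leaf x)).ncard = 1
  leavesOnly : ∀ v, (g.neighborSet v).ncard = 1 → ∃ x, leaf x = v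
  internalDeg : ∀ v, (g.neighborSet v).ncard ≠ 1 → (g.neighborSet v).ncard = 3

variable {X V C : Type} [Fintype V]

/-- `ω` extends the character `χ` to all vertices of `T`. -/
def IsExtension (T : XTree X V) (χ : X → C) (ω : V → C) : Prop :=
  ∀ x, ω (T.leaf x) = χ x

/-- The parsimony score `ℓ(T,χ)`: the minimum number of mutation edges over
all extensions of `χ` to `T`. -/
noncomputable def score (T : XTree X V) (χ : X → C) : ℕ :=
  sInf {n | ∃ ω : V → C, IsExtension T χ ω ∧ (mutationEdges T.g ω).ncard = n}

/-- A most parsimonious extension. -/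
def IsMPExtension (T : XTree X V) (χ : X → C) (ω : V → C) : Prop :=
  IsExtension T χ ω ∧ (mutationEdges T.g ω).ncard = score T χ

/-- `|χ|`: the number of states used by the character `χ`. -/
noncomputable def nStates {X C : Type} (χ : X → C) : ℕ := (Set.range χ).ncard

/-- `χ` is convex on `T`: its parsimony score equals its number of states minus one. -/
def IsConvex (T : XTree X V) (χ : X → C) : Prop := score T χ = nStates χ - 1

/-- The maximum parsimony distance between two `X`-trees. -/
noncomputable def dMP {V₁ V₂ : Type} [Fintype V₁] [Fintype V₂]
    (T₁ : XTree X V₁) (T₂ : XTree X V₂) : ℕ :=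
  sSup {d | ∃ χ : X → ℕ, Nat.dist (score T₁ χ) (score T₂ χ) = d}

/-- A character achieving the maximum parsimony distance. -/
def IsOptimal {V₁ V₂ : Type} [Fintype V₁] [Fintype V₂]
    (T₁ : XTree X V₁) (T₂ : XTree X V₂) (χ : X → C) : Prop :=
  Nat.dist (score T₁ χ) (score T₂ χ) = dMP T₁ T₂

/-- The forest induced by an extension `ω`: delete all mutation edges of `ω` from `T`. -/
noncomputable def forest (T : XTree X V) (ω : V → C) : SimpleGraph V :=
  T.g.deleteEdges (mutationEdges T.g ω)

/-- A connected component `c` of the forest `F` carries the state `s`. -/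
def carries {V C : Type} (F : SimpleGraph V) (ω : V → C) (c : F.ConnectedComponent) (s : C) : Prop :=
  ∃ v, F.connectedComponentMk v = c ∧ ω v = s

/-- The number of components of `F` carrying the state `s`. A state is *unique*
if this is 1 and *repeating* if this is at least 2. -/
noncomputable def stateMultiplicity {V C : Type} (F : SimpleGraph V) (ω : V → C) (s : C) : ℕ :=
  {c : F.ConnectedComponent | carries F ω c s}.ncard

/-- Relabel the state `A` as `B` in the character `χ`. -/
def relabel {X C : Type} [DecidableEq C] (χ : X → C) (A B : C) : X → C :=
  fun x => if χ x = A then B else χ x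

/-- Two states `A`, `B` are adjacent (with respect to the coloring `ω`) if some edge of the
graph joins a vertex colored `A` to a vertex colored `B`; for distinct states, this edge is a
mutation edge joining the corresponding components of the induced forest. -/
def statesAdjacent {V C : Type} (g : SimpleGraph V) (ω : V → C) (A B : C) : Prop :=
  ∃ u v, g.Adj u v ∧ ω u = A ∧ ω v = B

/-! ### Auxiliary lemmas -/

section Aux

variable {C' : Type}

lemma eq_of_forest_walk (T : XTree X V) (ω : V → C) {u v : V}
    (w : (forest T ω).Walk u v) : ω u = ω v := by
  induction w with
  | nil => rfl
  | @cons p q r h w ih =>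
    have h' := (SimpleGraph.deleteEdges_adj.mp h)
    have hpq : ω p = ω q := by
      by_contra hne
      exact h'.2 ⟨T.g.mem_edgeSet.mpr h'.1, p, q, rfl, hne⟩
    exact hpq.trans ih

lemma eq_of_forest_reachable (T : XTree X V) (ω : V → C) {u v : V}
    (h : (forest T ω).Reachable u v) : ω u = ω v := by
  obtain ⟨w⟩ := h; exact eq_of_forest_walk T ω w

lemma mutationEdges_comp_subset (g : SimpleGraph V) (ω : V → C) (f : C → C') :
    mutationEdges g (f ∘ ω) ⊆ mutationEdges g ω := by
  rintro e ⟨he, u, v, rfl, hne⟩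
  exact ⟨he, u, v, rfl, fun h => hne (congrArg f h)⟩

lemma exists_extension (T : XTree X V) (χ : X → C) (c₀ : C) :
    ∃ ω, IsExtension T χ ω := by
  classical
  refine ⟨fun v => if h : ∃ x, T.leaf x = v then χ h.choose else c₀, fun x => ?_⟩
  have h : ∃ x', T.leaf x' = T.leaf x := ⟨x, rfl⟩
  simp only [dif_pos h]
  exact congrArg χ (T.leafInj h.choose_spec)

lemma score_le {T : XTree X V} {χ : X → C} {ω : V → C} (h : IsExtension T χ ω) :
    score T χ ≤ (mutationEdges T.g ω).ncard :=
  Nat.sInf_le ⟨ω, h, rfl⟩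

lemma exists_mp (T : XTree X V) (χ : X → C) (c₀ : C) :
    ∃ ω, IsExtension T χ ω ∧ (mutationEdges T.g ω).ncard = score T χ := by
  obtain ⟨ω₀, h₀⟩ := exists_extension T χ c₀
  have hne : {n | ∃ ω : V → C, IsExtension T χ ω ∧ (mutationEdges T.g ω).ncard = n}.Nonempty :=
    ⟨_, ω₀, h₀, rfl⟩
  exact Nat.sInf_mem hne

lemma score_comp_le (T : XTree X V) (χ : X → C) (f : C → C') (c₀ : C) :
    score T (f ∘ χ) ≤ score T χ := by
  obtain ⟨ω, hext, hn⟩ := exists_mp T χ c₀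
  calc score T (f ∘ χ) ≤ (mutationEdges T.g (f ∘ ω)).ncard :=
        score_le (fun x => congrArg f (hext x))
    _ ≤ (mutationEdges T.g ω).ncard :=
        Set.ncard_le_ncard (mutationEdges_comp_subset T.g ω f) (Set.toFinite _)
    _ = score T χ := hn

lemma score_comp_eq (T : XTree X V) (χ : X → C) (f : C → C') (g : C' → C) (c₀ : C)
    (hg : ∀ x, g (f (χ x)) = χ x) : score T (f ∘ χ) = score T χ := by
  refine le_antisymm (score_comp_le T χ f c₀) ?_
  have h2 : score T (g ∘ (f ∘ χ)) ≤ score T (f ∘ χ) := score_comp_le T (f ∘ χ) g (f c₀)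
  have he : g ∘ (f ∘ χ) = χ := funext hg
  rwa [he] at h2

/-- Walking in `H`, one either stays reachable after deleting the edge `s(x,y)`, or the
walk used that edge. -/
lemma deleteEdge_walk_cases {H : SimpleGraph V} (x y : V) {v t : V} (w : H.Walk v t) :
    (H.deleteEdges {s(x, y)}).Reachable v t ∨
      (H.Adj x y ∧ ((H.deleteEdges {s(x, y)}).Reachable v x ∨
        (H.deleteEdges {s(x, y)}).Reachable v y)) := by
  induction w with
  | nil => exact Or.inl (SimpleGraph.Reachable.refl _)
  | @cons p q r h w ih =>
    by_cases hc : s(p, q) = s(x, y)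
    · have hxy : H.Adj x y := by
        rcases Sym2.eq_iff.mp hc with ⟨rfl, rfl⟩ | ⟨rfl, rfl⟩
        exacts [h, h.symm]
      refine Or.inr ⟨hxy, ?_⟩
      rcases Sym2.eq_iff.mp hc with ⟨rfl, rfl⟩ | ⟨rfl, rfl⟩
      · exact Or.inl (SimpleGraph.Reachable.refl _)
      · exact Or.inr (SimpleGraph.Reachable.refl _)
    · have hadj : (H.deleteEdges {s(x, y)}).Adj p q :=
        SimpleGraph.deleteEdges_adj.mpr ⟨h, by simpa using hc⟩
      rcases ih with h1 | ⟨hxy, h1⟩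
      · exact Or.inl (hadj.reachable.trans h1)
      · exact Or.inr ⟨hxy, h1.imp (fun hh => hadj.reachable.trans hh)
          (fun hh => hadj.reachable.trans hh)⟩

/-- Deleting a single edge increases the number of connected components by at most one. -/
lemma card_cc_deleteEdge_le (H : SimpleGraph V) (x y : V) :
    Nat.card (H.deleteEdges {s(x, y)}).ConnectedComponent ≤
      Nat.card H.ConnectedComponent + 1 := by
  classical
  have K1 : ∀ v : V, H.Reachable v x →
      (H.deleteEdges {s(x, y)}).Reachable v x ∨ (H.deleteEdges {s(x, y)}).Reachable v y := by
    intro v hv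
    obtain ⟨w⟩ := hv
    rcases deleteEdge_walk_cases x y w with h | ⟨_, h⟩
    · exact Or.inl h
    · exact h
  have K2 : ∀ v t : V, H.Reachable v t → ¬H.Reachable v x →
      (H.deleteEdges {s(x, y)}).Reachable v t := by
    intro v t hvt hvx
    obtain ⟨w⟩ := hvt
    rcases deleteEdge_walk_cases x y w with h | ⟨hxy, h | h⟩
    · exact h
    · exact absurd (h.mono (SimpleGraph.deleteEdges_le _)) hvx
    · exact absurd (((h.mono (SimpleGraph.deleteEdges_le _))).trans hxy.symm.reachable) hvx
  have hφmk : ∀ v : V,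
      SimpleGraph.ConnectedComponent.map
        (SimpleGraph.Hom.ofLE (SimpleGraph.deleteEdges_le {s(x, y)}))
        ((H.deleteEdges {s(x, y)}).connectedComponentMk v) = H.connectedComponentMk v := by
    intro v; simp
  have hinj : Function.Injective (fun c : (H.deleteEdges {s(x, y)}).ConnectedComponent =>
      if c = (H.deleteEdges {s(x, y)}).connectedComponentMk y then (none : Option H.ConnectedComponent)
      else some (c.map (SimpleGraph.Hom.ofLE (SimpleGraph.deleteEdges_le _)))) := by
    intro c₁ c₂ hcc
    simp only at hcc
    by_cases h1 : c₁ = (H.deleteEdges {s(x, y)}).connectedComponentMk y <;>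
      by_cases h2 : c₂ = (H.deleteEdges {s(x, y)}).connectedComponentMk y
    · exact h1.trans h2.symm
    · rw [if_pos h1, if_neg h2] at hcc; exact absurd hcc (by simp)
    · rw [if_neg h1, if_pos h2] at hcc; exact absurd hcc (by simp)
    · rw [if_neg h1, if_neg h2] at hcc
      have hφeq := Option.some_injective _ hcc
      obtain ⟨v₁, rfl⟩ := c₁.exists_rep
      obtain ⟨v₂, rfl⟩ := c₂.exists_rep
      have hreach : H.Reachable v₁ v₂ := by
        apply SimpleGraph.ConnectedComponent.exact
        rw [← hφmk v₁, ← hφmk v₂]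
        exact hφeq
      apply SimpleGraph.ConnectedComponent.sound
      by_cases hvx : H.Reachable v₁ x
      · have r₁ : (H.deleteEdges {s(x, y)}).Reachable v₁ x := by
          rcases K1 v₁ hvx with h | h
          · exact h
          · exact absurd (SimpleGraph.ConnectedComponent.sound h) h1
        have r₂ : (H.deleteEdges {s(x, y)}).Reachable v₂ x := by
          rcases K1 v₂ (hreach.symm.trans hvx) with h | h
          · exact h
          · exact absurd (SimpleGraph.ConnectedComponent.sound h) h2
        exact r₁.trans r₂.symm
      · exact K2 v₁ v₂ hreach hvx
  have hcard := Nat.card_le_card_of_injective _ hinj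
  rwa [Finite.card_option] at hcard

lemma card_cc_deleteEdge_le' (H : SimpleGraph V) (e : Sym2 V) :
    Nat.card (H.deleteEdges {e}).ConnectedComponent ≤ Nat.card H.ConnectedComponent + 1 := by
  induction e using Sym2.ind with
  | _ x y => exact card_cc_deleteEdge_le H x y

lemma card_cc_deleteEdges_le (g : SimpleGraph V) (D : Set (Sym2 V)) (hD : D.Finite) :
    Nat.card (g.deleteEdges D).ConnectedComponent ≤ Nat.card g.ConnectedComponent + D.ncard := by
  induction D, hD using Set.Finite.induction_on with
  | empty => simp
  | @insert a D haD hDfin ih =>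
    have h1 : g.deleteEdges (insert a D) = (g.deleteEdges D).deleteEdges {a} := by
      rw [SimpleGraph.deleteEdges_deleteEdges, Set.union_singleton]
    rw [h1, Set.ncard_insert_of_notMem haD hDfin]
    calc Nat.card ((g.deleteEdges D).deleteEdges {a}).ConnectedComponent
        ≤ Nat.card (g.deleteEdges D).ConnectedComponent + 1 :=
          card_cc_deleteEdge_le' (g.deleteEdges D) a
      _ ≤ Nat.card g.ConnectedComponent + D.ncard + 1 := by omega
      _ = Nat.card g.ConnectedComponent + (D.ncard + 1) := by omega

lemma card_cc_of_connected {g : SimpleGraph V} (h : g.Connected) :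
    Nat.card g.ConnectedComponent = 1 := by
  rw [Nat.card_eq_one_iff_unique]
  constructor
  · constructor
    intro c₁ c₂
    obtain ⟨v₁, rfl⟩ := c₁.exists_rep
    obtain ⟨v₂, rfl⟩ := c₂.exists_rep
    exact SimpleGraph.ConnectedComponent.sound (h.preconnected v₁ v₂)
  · have hne : Nonempty V := h.nonempty
    exact ⟨g.connectedComponentMk hne.some⟩

/-- Any extension uses at least `nStates χ - 1` mutation edges. -/
lemma nStates_le_mut (T : XTree X V) {χ : X → C} {ω : V → C} (hext : IsExtension T χ ω) :
    nStates χ ≤ (mutationEdges T.g ω).ncard + 1 := by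
  classical
  set F := forest T ω with hF
  set f : Set.range χ → F.ConnectedComponent :=
    fun s => F.connectedComponentMk (T.leaf s.2.choose) with hf
  have hval : ∀ s : Set.range χ, ω (T.leaf s.2.choose) = (s : C) := by
    intro s
    rw [hext s.2.choose]
    exact s.2.choose_spec
  have hinj : Function.Injective f := by
    intro s₁ s₂ hss
    have hr : F.Reachable (T.leaf s₁.2.choose) (T.leaf s₂.2.choose) :=
      SimpleGraph.ConnectedComponent.exact hss
    have := eq_of_forest_reachable T ω hr
    rw [hval s₁, hval s₂] at this
    exact Subtype.ext this
  have h1 : nStates χ ≤ Nat.card F.ConnectedComponent := by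
    rw [nStates, ← Nat.card_coe_set_eq]
    exact Nat.card_le_card_of_injective f hinj
  have h2 : Nat.card F.ConnectedComponent ≤
      Nat.card T.g.ConnectedComponent + (mutationEdges T.g ω).ncard :=
    card_cc_deleteEdges_le T.g _ (Set.toFinite _)
  have h3 := card_cc_of_connected T.isTree.isConnected
  omega

lemma score_ge_nStates (T : XTree X V) (χ : X → C) (c₀ : C) :
    nStates χ ≤ score T χ + 1 := by
  obtain ⟨ω, hext, hn⟩ := exists_mp T χ c₀
  rw [← hn]
  exact nStates_le_mut T hext

lemma range_relabel [DecidableEq C] {χ : X → C} {A B : C}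
    (hB : B ∈ Set.range χ) (hAB : A ≠ B) :
    Set.range (relabel χ A B) = Set.range χ \ {A} := by
  ext c
  constructor
  · rintro ⟨x, rfl⟩
    by_cases h : χ x = A
    · simp only [relabel, if_pos h]
      refine ⟨hB, ?_⟩
      intro hc
      exact hAB (Set.mem_singleton_iff.mp hc).symm
    · simp only [relabel, if_neg h]
      exact ⟨⟨x, rfl⟩, by simpa using h⟩
  · rintro ⟨⟨x, rfl⟩, hc⟩
    have h : χ x ≠ A := by simpa using hc
    exact ⟨x, by simp [relabel, if_neg h]⟩

/-- The key separation lemma: under the uniqueness hypotheses, merging `A` into `B`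
decreases the parsimony score on `T` by at most one. -/
lemma score_relabel_ge [DecidableEq C] (T : XTree X V) (χ : X → C) (ω : V → C)
    (hω : IsExtension T χ ω) (hmut : (mutationEdges T.g ω).ncard = score T χ)
    (A B : C) (hAB : A ≠ B) (hA : A ∈ Set.range χ) (hB : B ∈ Set.range χ)
    (hAu : stateMultiplicity (forest T ω) ω A = 1)
    (hBu : stateMultiplicity (forest T ω) ω B = 1) :
    score T χ ≤ score T (relabel χ A B) + 1 := by
  classical
  obtain ⟨xA, hxA⟩ := hA
  obtain ⟨xB, hxB⟩ := hB
  set F := forest T ω with hF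
  set M := mutationEdges T.g ω with hM
  set a := T.leaf xA with ha
  set b := T.leaf xB with hb
  have hωa : ω a = A := (hω xA).trans hxA
  have hωb : ω b = B := (hω xB).trans hxB
  have huniq : ∀ (s : C) (v₀ : V), ω v₀ = s → stateMultiplicity F ω s = 1 →
      ∀ v, ω v = s → F.connectedComponentMk v = F.connectedComponentMk v₀ := by
    intro s v₀ hv₀ hmult v hv
    obtain ⟨c₀, hc₀⟩ := Set.ncard_eq_one.mp hmult
    have h1 : F.connectedComponentMk v ∈ {c : F.ConnectedComponent | carries F ω c s} :=
      ⟨v, rfl, hv⟩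
    have h2 : F.connectedComponentMk v₀ ∈ {c : F.ConnectedComponent | carries F ω c s} :=
      ⟨v₀, rfl, hv₀⟩
    rw [hc₀] at h1 h2
    rw [Set.mem_singleton_iff.mp h1, Set.mem_singleton_iff.mp h2]
  have hAcomp := huniq A a hωa hAu
  have hBcomp := huniq B b hωb hBu
  have hFnab : ¬F.Reachable a b := by
    intro hr
    exact hAB ((hωa.symm.trans (eq_of_forest_reachable T ω hr)).trans hωb)
  have hconn : T.g.Connected := T.isTree.isConnected
  -- find a single mutation edge separating `a` from `b`
  have hkey : ∃ e ∈ M, ¬(T.g.deleteEdges {e}).Reachable a b := by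
    by_contra hno
    push_neg at hno
    obtain ⟨w⟩ := hconn.preconnected a b
    set P : T.g.Walk a b := (w.toPath : T.g.Walk a b)
    have hPavoid : ∀ e ∈ P.edges, e ∉ M := by
      intro e heP heM
      obtain ⟨w'⟩ := hno e heM
      have hsub : ∀ e' ∈ w'.edges, e' ∈ T.g.edgeSet := by
        intro e' he'
        have := w'.edges_subset_edgeSet he'
        rw [SimpleGraph.edgeSet_deleteEdges] at this
        exact this.1
      set w'' : T.g.Walk a b := w'.transfer T.g hsub with hw''
      set P' : T.g.Walk a b := (w''.toPath : T.g.Walk a b) with hP'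
      have heP' : e ∉ P'.edges := by
        intro hmem
        have h1 : e ∈ w''.edges := w''.edges_toPath_subset hmem
        rw [hw'', SimpleGraph.Walk.edges_transfer] at h1
        have h2 := w'.edges_subset_edgeSet h1
        rw [SimpleGraph.edgeSet_deleteEdges] at h2
        exact h2.2 rfl
      have huniqP := SimpleGraph.isAcyclic_iff_path_unique.mp T.isTree.IsAcyclic
        w.toPath w''.toPath
      apply heP'
      have : P = P' := congrArg Subtype.val huniqP
      rwa [← this]
    exact hFnab ⟨P.toDeleteEdges M hPavoid⟩
  obtain ⟨e, heM, hsep⟩ := hkey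
  set H := T.g.deleteEdges {e} with hH
  have hFH : F ≤ H := SimpleGraph.deleteEdges_anti (by simpa using heM)
  obtain ⟨ω', hext', hn'⟩ := exists_mp T (relabel χ A B) A
  set ω'' : V → C := fun v => if H.Reachable v a ∧ ω' v = B then A else ω' v with hω''
  have hext'' : IsExtension T χ ω'' := by
    intro x
    by_cases hx : χ x = A
    · have h1 : F.Reachable (T.leaf x) a :=
        SimpleGraph.ConnectedComponent.exact (hAcomp _ ((hω x).trans hx))
      have h2 : H.Reachable (T.leaf x) a := h1.mono hFH
      have hrx : relabel χ A B x = B := by simp [relabel, hx]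
      have h3 : ω' (T.leaf x) = B := (hext' x).trans hrx
      rw [hω'']
      simp only [if_pos (And.intro h2 h3)]
      exact hx.symm
    · have hrx : relabel χ A B x = χ x := by simp [relabel, hx]
      have h3 : ω' (T.leaf x) = χ x := (hext' x).trans hrx
      by_cases hx' : χ x = B
      · have h1 : F.Reachable (T.leaf x) b :=
          SimpleGraph.ConnectedComponent.exact (hBcomp _ ((hω x).trans hx'))
        have h2 : ¬H.Reachable (T.leaf x) a := fun hr => hsep (((h1.mono hFH).symm.trans hr).symm)
        rw [hω'']
        simp only [if_neg (fun hc : _ ∧ _ => h2 hc.1)]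
        exact h3
      · have hnB : ω' (T.leaf x) ≠ B := by rw [h3]; exact hx'
        rw [hω'']
        simp only [if_neg (fun hc : _ ∧ _ => hnB hc.2)]
        exact h3
  have hsub : mutationEdges T.g ω'' ⊆ mutationEdges T.g ω' ∪ {e} := by
    rintro e' ⟨he', p, q, rfl, hne⟩
    by_cases hc : s(p, q) = e
    · exact Or.inr (by simpa using hc)
    · left
      have hHpq : H.Reachable p q :=
        (SimpleGraph.deleteEdges_adj.mpr ⟨T.g.mem_edgeSet.mp he', by simpa using hc⟩).reachable
      have hiff : H.Reachable p a ↔ H.Reachable q a :=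
        ⟨fun h => hHpq.symm.trans h, fun h => hHpq.trans h⟩
      refine ⟨he', p, q, rfl, ?_⟩
      intro hpq
      apply hne
      rw [hω'']
      by_cases hp : H.Reachable p a ∧ ω' p = B
      · have hq : H.Reachable q a ∧ ω' q = B := ⟨hiff.mp hp.1, hpq ▸ hp.2⟩
        simp only [if_pos hp, if_pos hq]
      · have hq : ¬(H.Reachable q a ∧ ω' q = B) := fun hq => hp ⟨hiff.mpr hq.1, hpq.symm ▸ hq.2⟩
        simp only [if_neg hp, if_neg hq]
        exact hpq
  calc score T χ ≤ (mutationEdges T.g ω'').ncard := score_le hext''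
    _ ≤ (mutationEdges T.g ω' ∪ {e}).ncard :=
        Set.ncard_le_ncard hsub (Set.toFinite _)
    _ ≤ (mutationEdges T.g ω').ncard + ({e} : Set (Sym2 V)).ncard :=
        Set.ncard_union_le _ _
    _ = score T (relabel χ A B) + 1 := by rw [hn', Set.ncard_singleton]

end Aux

end PhyloMP

open PhyloMP in
/-- If `χ` is an optimal character convex on `T₁`, the distinct states
`A`, `B` are `F₁`-adjacent, and both `A` and `B` are unique in the forest `F₂` induced by
a most parsimonious extension to `T₂`, then relabeling `A := B` decreases `ℓ(T₂,·)` by at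
most one and yields again an optimal convex character with one fewer state. -/
theorem stmt_12 {X V₁ V₂ C : Type} [Fintype V₁] [Fintype V₂] [DecidableEq C]
    (T₁ : XTree X V₁) (T₂ : XTree X V₂) (χ : X → C)
    (hopt : IsOptimal T₁ T₂ χ) (hconv : IsConvex T₁ χ)
    (ω₁ : V₁ → C) (hω₁ : IsMPExtension T₁ χ ω₁)
    (ω₂ : V₂ → C) (hω₂ : IsMPExtension T₂ χ ω₂)
    (A B : C) (hAB : A ≠ B) (hA : A ∈ Set.range χ) (hB : B ∈ Set.range χ)
    (hadj : statesAdjacent T₁.g ω₁ A B)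
    (hAu : stateMultiplicity (forest T₂ ω₂) ω₂ A = 1)
    (hBu : stateMultiplicity (forest T₂ ω₂) ω₂ B = 1) :
    score T₂ χ ≤ score T₂ (relabel χ A B) + 1 ∧
    IsOptimal T₁ T₂ (relabel χ A B) ∧
    IsConvex T₁ (relabel χ A B) ∧
    nStates (relabel χ A B) + 1 = nStates χ := by
  classical
  set χ' := relabel χ A B with hχ'def
  -- finiteness of the range of χ
  have hχrange : Set.range χ ⊆ Set.range ω₂ := by
    rintro c ⟨x, rfl⟩
    exact ⟨T₂.leaf x, hω₂.1 x⟩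
  have hfinχ : (Set.range χ).Finite := (Set.finite_range ω₂).subset hχrange
  have hrangeχ' : Set.range χ' = Set.range χ \ {A} := range_relabel hB hAB
  have hfinχ' : (Set.range χ').Finite := by
    rw [hrangeχ']; exact hfinχ.subset Set.diff_subset
  -- the number of states
  have hn2 : 2 ≤ nStates χ := by
    have hsub : ({A, B} : Set C) ⊆ Set.range χ := by
      rintro c (rfl | rfl)
      exacts [hA, hB]
    calc 2 = ({A, B} : Set C).ncard := (Set.ncard_pair hAB).symm
      _ ≤ (Set.range χ).ncard := Set.ncard_le_ncard hsub hfinχ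
  have h4 : nStates χ' + 1 = nStates χ := by
    have h1 : nStates χ' = (Set.range χ).ncard - 1 := by
      rw [nStates, hrangeχ', Set.ncard_diff_singleton_of_mem hA]
    have h2 : nStates χ = (Set.range χ).ncard := rfl
    omega
  -- the score on T₁ drops by exactly one
  have e1 : score T₁ χ = nStates χ - 1 := hconv
  obtain ⟨u, v, huv, hu, hv⟩ := hadj
  have hmutual : s(u, v) ∈ mutationEdges T₁.g ω₁ :=
    ⟨T₁.g.mem_edgeSet.mpr huv, u, v, rfl, by rw [hu, hv]; exact hAB⟩
  have hfsub : mutationEdges T₁.g ((fun c => if c = A then B else c) ∘ ω₁) ⊆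
      mutationEdges T₁.g ω₁ \ {s(u, v)} := by
    rintro e ⟨he, p, q, rfl, hne⟩
    refine ⟨⟨he, p, q, rfl, fun h => hne (congrArg (fun c => if c = A then B else c) h)⟩, ?_⟩
    intro hmem
    have heq := Set.mem_singleton_iff.mp hmem
    apply hne
    rcases Sym2.eq_iff.mp heq with ⟨rfl, rfl⟩ | ⟨rfl, rfl⟩ <;>
      simp [hu, hv, Ne.symm hAB]
  have hb1 : score T₁ χ' + 1 ≤ score T₁ χ := by
    have hext : IsExtension T₁ χ' ((fun c => if c = A then B else c) ∘ ω₁) :=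
      fun x => congrArg (fun c => if c = A then B else c) (hω₁.1 x)
    have h1 : score T₁ χ' ≤ (mutationEdges T₁.g ω₁ \ {s(u, v)}).ncard :=
      le_trans (score_le hext) (Set.ncard_le_ncard hfsub (Set.toFinite _))
    have h2 : (mutationEdges T₁.g ω₁ \ {s(u, v)}).ncard =
        (mutationEdges T₁.g ω₁).ncard - 1 :=
      Set.ncard_diff_singleton_of_mem hmutual
    have h3 : 0 < (mutationEdges T₁.g ω₁).ncard :=
      (Set.ncard_pos (Set.toFinite _)).mpr ⟨_, hmutual⟩
    have h5 := hω₁.2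
    omega
  -- lower bounds from the number of states
  have hg1 : nStates χ' ≤ score T₁ χ' + 1 := score_ge_nStates T₁ χ' A
  have hg2 : nStates χ ≤ score T₂ χ + 1 := score_ge_nStates T₂ χ A
  have hg2' : nStates χ' ≤ score T₂ χ' + 1 := score_ge_nStates T₂ χ' A
  -- the key claim
  have claim1 : score T₂ χ ≤ score T₂ χ' + 1 :=
    score_relabel_ge T₂ χ ω₂ hω₂.1 hω₂.2 A B hAB hA hB hAu hBu
  -- transfer χ' to an ℕ-valued character with the same scores
  haveI : Countable ↥(Set.range χ') := @Finite.to_countable _ hfinχ'.to_subtype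
  obtain ⟨gemb, hgemb⟩ := countable_iff_exists_injective (↥(Set.range χ')) |>.mp inferInstance
  set fC : C → ℕ := fun c => if h : c ∈ Set.range χ' then gemb ⟨c, h⟩ else 0 with hfC
  set gN : ℕ → C := fun m => if h : ∃ c ∈ Set.range χ', fC c = m then h.choose else A with hgN
  have hginv : ∀ x, gN (fC (χ' x)) = χ' x := by
    intro x
    have hmem : χ' x ∈ Set.range χ' := ⟨x, rfl⟩
    have hex : ∃ c ∈ Set.range χ', fC c = fC (χ' x) := ⟨χ' x, hmem, rfl⟩
    simp only [hgN, dif_pos hex]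
    obtain ⟨hc1, hc2⟩ := hex.choose_spec
    have e₁ : fC hex.choose = gemb ⟨hex.choose, hc1⟩ := dif_pos hc1
    have e₂ : fC (χ' x) = gemb ⟨χ' x, hmem⟩ := dif_pos hmem
    have hc3 : gemb ⟨hex.choose, hc1⟩ = gemb ⟨χ' x, hmem⟩ := by
      rw [← e₁, ← e₂]; exact hc2
    exact congrArg Subtype.val (hgemb hc3)
  have hs1N : score T₁ (fC ∘ χ') = score T₁ χ' := score_comp_eq T₁ χ' fC gN A hginv
  have hs2N : score T₂ (fC ∘ χ') = score T₂ χ' := score_comp_eq T₂ χ' fC gN A hginv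
  -- the supremum defining dMP is attained over a bounded set
  have hbdd : BddAbove {d | ∃ ψ : X → ℕ, Nat.dist (score T₁ ψ) (score T₂ ψ) = d} := by
    refine ⟨(Set.univ : Set (Sym2 V₁)).ncard + (Set.univ : Set (Sym2 V₂)).ncard,
      fun d hd => ?_⟩
    obtain ⟨ψ, rfl⟩ := hd
    have hbb1 : score T₁ ψ ≤ (Set.univ : Set (Sym2 V₁)).ncard := by
      obtain ⟨ω₀, h₀⟩ := exists_extension T₁ ψ 0
      exact le_trans (score_le h₀) (Set.ncard_le_ncard (Set.subset_univ _) Set.finite_univ)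
    have hbb2 : score T₂ ψ ≤ (Set.univ : Set (Sym2 V₂)).ncard := by
      obtain ⟨ω₀, h₀⟩ := exists_extension T₂ ψ 0
      exact le_trans (score_le h₀) (Set.ncard_le_ncard (Set.subset_univ _) Set.finite_univ)
    have hdist : Nat.dist (score T₁ ψ) (score T₂ ψ) ≤ score T₁ ψ + score T₂ ψ := by
      simp only [Nat.dist]
      omega
    omega
  have hle' : Nat.dist (score T₁ χ') (score T₂ χ') ≤ dMP T₁ T₂ := by
    rw [← hs1N, ← hs2N]
    exact le_csSup hbdd ⟨fC ∘ χ', rfl⟩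
  have hoptval : Nat.dist (score T₁ χ) (score T₂ χ) = dMP T₁ T₂ := hopt
  -- numerics
  have hle12 : score T₁ χ ≤ score T₂ χ := by omega
  have hle12' : score T₁ χ' ≤ score T₂ χ' := by omega
  have hd : dMP T₁ T₂ = score T₂ χ - score T₁ χ := by
    rw [← hoptval, Nat.dist_eq_sub_of_le hle12]
  rw [Nat.dist_eq_sub_of_le hle12'] at hle'
  refine ⟨claim1, ?_, ?_, h4⟩
  · show Nat.dist (score T₁ χ') (score T₂ χ') = dMP T₁ T₂
    rw [Nat.dist_eq_sub_of_le hle12']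
    omega
  · show score T₁ χ' = nStates χ' - 1
    omega
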